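/- Let b ∈ E. The map sending each a ∈ E* \ {0} to the unique α ∈ H_b with (σ_b⁻¹ * α * σ_b) 1 = a is a bijection from E* \ {0} onto H_b; in particular, H_b = {α ∈ G : α b = b and (σ_b⁻¹ * α * σ_b) 1 ∈ E* \ {0}} and card (E* \ {0}) = card H_b. -/

import Mathlib

/-- For `b ∈ E`, the map sending each `a ∈ E* \ {0}` to the unique
`α ∈ H_b` with `(σ_b⁻¹ * α * σ_b) 1 = a` is a bijection from `E* \ {0}` onto `H_b`;
in particular `H_b = {α ∈ G : α b = b ∧ (σ_b⁻¹ * α * σ_b) 1 ∈ E* \ {0}}` and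
`card (E* \ {0}) = card H_b`. -/
theorem stmt_10 {E : Type*} [Fintype E] [Nonempty E]
    (G : Subgroup (Equiv.Perm E))
    (htrans : ∀ x y : E, ∃ g ∈ G, g x = y)
    (hirreg : ∃ g ∈ G, g ≠ 1 ∧ ∃ x : E, g x = x)
    (hfrob : ∀ g ∈ G, g ≠ 1 → ∀ x y : E, g x = x → g y = y → x = y)
    (e0 e1 : E) (h01 : e0 ≠ e1)
    (σ : E → G) (hσ0 : σ e0 = 1) (hσ : ∀ x : E, (σ x : Equiv.Perm E) e0 = x)
    (b : E) :
    (∃ F : E → G,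
      (∀ a ∈ (({e0} ∪ {y : E | ∃ h : G, (h : Equiv.Perm E) e0 = e0 ∧ (h : Equiv.Perm E) e1 = y}) \ {e0}),
        (F a : Equiv.Perm E) b = b ∧
        (((σ b)⁻¹ * F a * σ b : G) : Equiv.Perm E) e1 = a ∧
        ∀ α : G, (α : Equiv.Perm E) b = b →
          (((σ b)⁻¹ * α * σ b : G) : Equiv.Perm E) e1 = a → α = F a) ∧
      Set.BijOn F
        (({e0} ∪ {y : E | ∃ h : G, (h : Equiv.Perm E) e0 = e0 ∧ (h : Equiv.Perm E) e1 = y}) \ {e0})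
        {α : G | (α : Equiv.Perm E) b = b}) ∧
    {α : G | (α : Equiv.Perm E) b = b} =
      {α : G | (α : Equiv.Perm E) b = b ∧
        (((σ b)⁻¹ * α * σ b : G) : Equiv.Perm E) e1 ∈
          (({e0} ∪ {y : E | ∃ h : G, (h : Equiv.Perm E) e0 = e0 ∧ (h : Equiv.Perm E) e1 = y}) \ {e0})} ∧
    Nat.card (({e0} ∪ {y : E | ∃ h : G, (h : Equiv.Perm E) e0 = e0 ∧ (h : Equiv.Perm E) e1 = y}) \ {e0} : Set E) =
      Nat.card {α : G | (α : Equiv.Perm E) b = b} := by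
  classical
  set S : Set E := ({e0} ∪ {y : E | ∃ h : G, (h : Equiv.Perm E) e0 = e0 ∧ (h : Equiv.Perm E) e1 = y}) \ {e0} with hS
  have hb : (σ b : Equiv.Perm E) e0 = b := hσ b
  have hbinv : ((σ b : Equiv.Perm E))⁻¹ b = e0 :=
    (Equiv.Perm.inv_eq_iff_eq).mpr hb.symm
  -- uniqueness
  have uniq : ∀ h h' : G, (h : Equiv.Perm E) e0 = e0 → (h' : Equiv.Perm E) e0 = e0 →
      (h : Equiv.Perm E) e1 = (h' : Equiv.Perm E) e1 → h = h' := by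
    intro h h' h0 h0' h1
    by_contra hne
    have hg : (h'⁻¹ * h : G) ≠ 1 := by
      intro hE
      exact hne (inv_mul_eq_one.mp hE).symm
    have hgP : ((h'⁻¹ * h : G) : Equiv.Perm E) ≠ 1 :=
      fun hE => hg (by exact_mod_cast hE)
    have hx0 : ((h'⁻¹ * h : G) : Equiv.Perm E) e0 = e0 := by
      simp only [Subgroup.coe_mul, InvMemClass.coe_inv, Equiv.Perm.mul_apply, h0]
      exact (Equiv.Perm.inv_eq_iff_eq).mpr h0'.symm
    have hx1 : ((h'⁻¹ * h : G) : Equiv.Perm E) e1 = e1 := by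
      simp only [Subgroup.coe_mul, InvMemClass.coe_inv, Equiv.Perm.mul_apply, h1]
      exact (Equiv.Perm.inv_eq_iff_eq).mpr rfl
    exact h01 (hfrob _ (h'⁻¹ * h).2 hgP e0 e1 hx0 hx1)
  -- membership characterization
  have memS : ∀ a : E, a ∈ S ↔ (∃ h : G, (h : Equiv.Perm E) e0 = e0 ∧ (h : Equiv.Perm E) e1 = a) ∧ a ≠ e0 := by
    intro a
    constructor
    · rintro ⟨hu, hne⟩
      refine ⟨?_, hne⟩
      rcases hu with h | h
      · exact absurd h hne
      · exact h
    · rintro ⟨h, hne⟩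
      exact ⟨Or.inr h, hne⟩
  -- stabilizer element gives element of S
  have stabS : ∀ β : G, (β : Equiv.Perm E) e0 = e0 → (β : Equiv.Perm E) e1 ∈ S := by
    intro β h0
    rw [memS]
    refine ⟨⟨β, h0, rfl⟩, ?_⟩
    intro hE
    exact h01 ((β : Equiv.Perm E).injective (by rw [h0, hE])).symm
  -- β computation for α fixing b
  have conj0 : ∀ α : G, (α : Equiv.Perm E) b = b →
      (((σ b)⁻¹ * α * σ b : G) : Equiv.Perm E) e0 = e0 := by
    intro α hα
    simp only [Subgroup.coe_mul, InvMemClass.coe_inv, Equiv.Perm.mul_apply, hb, hα, hbinv]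
  -- define F
  set F : E → G := fun a =>
    if hc : ∃ h : G, (h : Equiv.Perm E) e0 = e0 ∧ (h : Equiv.Perm E) e1 = a
    then σ b * hc.choose * (σ b)⁻¹ else 1 with hF
  have Fspec : ∀ a ∈ S,
      (F a : Equiv.Perm E) b = b ∧
      (((σ b)⁻¹ * F a * σ b : G) : Equiv.Perm E) e1 = a ∧
      ∀ α : G, (α : Equiv.Perm E) b = b →
        (((σ b)⁻¹ * α * σ b : G) : Equiv.Perm E) e1 = a → α = F a := by
    intro a ha
    obtain ⟨⟨h, h0, h1⟩, hne⟩ := (memS a).mp ha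
    have hc : ∃ h : G, (h : Equiv.Perm E) e0 = e0 ∧ (h : Equiv.Perm E) e1 = a := ⟨h, h0, h1⟩
    have hFa : F a = σ b * hc.choose * (σ b)⁻¹ := by rw [hF]; simp [hc]
    obtain ⟨hc0, hc1⟩ := hc.choose_spec
    have hconj : ((σ b)⁻¹ * F a * σ b : G) = hc.choose := by
      rw [hFa]; group
    refine ⟨?_, ?_, ?_⟩
    · rw [hFa]
      simp only [Subgroup.coe_mul, InvMemClass.coe_inv, Equiv.Perm.mul_apply, hbinv, hc0, hb]
    · rw [hconj, hc1]
    · intro α hαb hα1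
      have h0' : (((σ b)⁻¹ * α * σ b : G) : Equiv.Perm E) e0 = e0 := conj0 α hαb
      have : ((σ b)⁻¹ * α * σ b : G) = hc.choose := uniq _ _ h0' hc0 (by rw [hα1, hc1])
      calc α = σ b * ((σ b)⁻¹ * α * σ b) * (σ b)⁻¹ := by group
        _ = F a := by rw [this, hFa]
  refine ⟨⟨F, Fspec, ?_, ?_, ?_⟩, ?_, ?_⟩
  · -- MapsTo
    intro a ha
    exact (Fspec a ha).1
  · -- InjOn
    intro a ha a' ha' hEq
    have h1 := (Fspec a ha).2.1
    have h2 := (Fspec a' ha').2.1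
    rw [← h1, ← h2, hEq]
  · -- SurjOn
    intro α hα
    have h0' := conj0 α hα
    have haS : (((σ b)⁻¹ * α * σ b : G) : Equiv.Perm E) e1 ∈ S := stabS _ h0'
    refine ⟨_, haS, ?_⟩
    exact ((Fspec _ haS).2.2 α hα rfl).symm
  · -- set equality
    ext α
    simp only [Set.mem_setOf_eq]
    constructor
    · intro hα
      exact ⟨hα, stabS _ (conj0 α hα)⟩
    · exact fun h => h.1
  · -- card
    have bij : Set.BijOn F S {α : G | (α : Equiv.Perm E) b = b} := by
      refine ⟨fun a ha => (Fspec a ha).1, ?_, ?_⟩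
      · intro a ha a' ha' hEq
        have h1 := (Fspec a ha).2.1
        have h2 := (Fspec a' ha').2.1
        rw [← h1, ← h2, hEq]
      · intro α hα
        have haS := stabS _ (conj0 α hα)
        exact ⟨_, haS, ((Fspec _ haS).2.2 α hα rfl).symm⟩
    exact Nat.card_congr (Set.BijOn.equiv F bij)
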